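/- Extend the previous worklist model by allowing each node n to additionally introduce new claims, each node permitted at most kₙ claims total over the whole execution, each claim carrying a value in a finite-height join-semilattice A of height H updated only by joins, and successors enqueued only when the claim-assessment map at a node changes (a new claim appears or some assessment strictly increases). Then the number of enqueue-triggering events in any execution is at most K + H·K where K = ∑ₙ kₙ, and the algorithm terminates. -/

import Mathlib

/-- Worklist model with claim generation: each node `n` carries a finite
partial map from claims `C` to a join-semilattice `A` of finite height `H`,
with at most `k n` claims ever active at `n`, claims never removed, values
updated only by joins, and each step modifying only the processed node.
Successors are enqueued only when the claim-assessment map at the node changes.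
Then the number of enqueue-triggering events is at most `K + H * K` where
`K = ∑ n, k n`, and the worklist becomes empty after finitely many
iterations. -/
theorem stmt_10 {V C A : Type*} [Fintype V] [DecidableEq V] [SemilatticeSup A]
    (H : ℕ) (hH : ∀ c : Fin (H + 2) → A, ¬ StrictMono c)
    (k : V → ℕ) (Succ : V → Finset V)
    (S : ℕ → V → C → Option A) (node : ℕ → V) (W : ℕ → Finset V)
    (hlocal : ∀ t m, m ≠ node t → S (t + 1) m = S t m)
    (hmono : ∀ t n c a, S t n c = some a →
      ∃ a', S (t + 1) n c = some a' ∧ a ≤ a')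
    (hbound : ∀ t n, Set.Finite {c | S t n c ≠ none} ∧
      Set.ncard {c | S t n c ≠ none} ≤ k n)
    (hW : ∀ t, W t ≠ ∅ → node t ∈ W t ∧
      ((S (t + 1) (node t) ≠ S t (node t) ∧
          W (t + 1) = (W t).erase (node t) ∪ Succ (node t)) ∨
       (S (t + 1) (node t) = S t (node t) ∧
          W (t + 1) = (W t).erase (node t)))) :
    (∀ s : Finset ℕ, (∀ t ∈ s, S (t + 1) (node t) ≠ S t (node t)) →
      s.card ≤ (∑ n, k n) + H * (∑ n, k n)) ∧
    (∃ t, W t = ∅) := by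
  classical
  -- monotonicity over time
  have mono2 : ∀ t n c a, S t n c = some a → ∀ t', t ≤ t' →
      ∃ a', S t' n c = some a' ∧ a ≤ a' := by
    intro t n c a h t' ht
    induction t', ht using Nat.le_induction with
    | base => exact ⟨a, h, le_refl a⟩
    | succ t'' h'' ih =>
        obtain ⟨a', ha', haa⟩ := ih
        obtain ⟨a'', ha'', h2⟩ := hmono t'' n c a' ha'
        exact ⟨a'', ha'', le_trans haa h2⟩
  -- fiber bound: times where a fixed claim at a fixed node changes
  have fiber_bound : ∀ (n : V) (c : C) (F : Finset ℕ),
      (∀ t ∈ F, S (t + 1) n c ≠ S t n c) → F.card ≤ H + 1 := by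
    intro n c F hF
    by_contra hcard
    push_neg at hcard
    have hval : ∀ t ∈ F, ∃ a, S (t + 1) n c = some a := by
      intro t ht
      cases h' : S (t + 1) n c with
      | none =>
          cases h : S t n c with
          | none => exact absurd (h'.trans h.symm) (hF t ht)
          | some a =>
              obtain ⟨a', ha', _⟩ := hmono t n c a h
              exact absurd (ha'.symm.trans h') (Option.some_ne_none a')
      | some a => exact ⟨a, rfl⟩
    obtain ⟨t0, ht0⟩ := Finset.card_pos.mp (by omega : 0 < F.card)
    obtain ⟨a0, _⟩ := hval t0 ht0
    have : Nonempty A := ⟨a0⟩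
    choose! val hvalspec using hval
    have h2 : H + 2 ≤ F.card := hcard
    set e := F.orderEmbOfCardLe h2 with he
    have hmem : ∀ i : Fin (H + 2), e i ∈ F := fun i =>
      F.orderEmbOfCardLe_mem h2 i
    have hsm : StrictMono (fun i : Fin (H + 2) => val (e i)) := by
      intro i j hij
      have hlt : e i < e j := e.strictMono hij
      have h1 : S (e i + 1) n c = some (val (e i)) := hvalspec _ (hmem i)
      obtain ⟨a'', ha'', hle⟩ := mono2 _ n c _ h1 (e j) (by omega)
      obtain ⟨a3, ha3, hle3⟩ := hmono (e j) n c a'' ha''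
      have hj : S (e j + 1) n c = some (val (e j)) := hvalspec _ (hmem j)
      have ha3j : a3 = val (e j) := by
        rw [ha3] at hj; exact Option.some.inj hj
      have hne' : a'' ≠ a3 := by
        intro h
        apply hF (e j) (hmem j)
        rw [ha3, ← h, ha'']
      calc val (e i) ≤ a'' := hle
        _ < a3 := lt_of_le_of_ne hle3 hne'
        _ = val (e j) := ha3j
    exact hH _ hsm
  have hcount : ∀ s : Finset ℕ, (∀ t ∈ s, S (t + 1) (node t) ≠ S t (node t)) →
      s.card ≤ (∑ n, k n) + H * (∑ n, k n) := by
    intro s hs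
    have hwit : ∀ t ∈ s, ∃ c, S (t + 1) (node t) c ≠ S t (node t) c := by
      intro t ht
      by_contra h
      push_neg at h
      exact hs t ht (funext h)
    rcases s.eq_empty_or_nonempty with rfl | ⟨t0, ht0⟩
    · simp
    obtain ⟨c0, _⟩ := hwit t0 ht0
    have : Nonempty C := ⟨c0⟩
    choose! w hw using hwit
    set f : ℕ → V × C := fun t => (node t, w t) with hf
    -- each fiber of f on s has card ≤ H+1
    have hfib : ∀ p ∈ s.image f, (s.filter (fun t => f t = p)).card ≤ H + 1 := by
      intro p _
      apply fiber_bound p.1 p.2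
      intro t ht
      rw [Finset.mem_filter] at ht
      obtain ⟨ht, hp⟩ := ht
      have h1 : node t = p.1 := congrArg Prod.fst hp
      have h2 : w t = p.2 := congrArg Prod.snd hp
      rw [← h1, ← h2]
      exact hw t ht
    have hsum : s.card = ∑ p ∈ s.image f, (s.filter (fun t => f t = p)).card :=
      Finset.card_eq_sum_card_fiberwise (fun t ht => Finset.mem_image_of_mem f ht)
    have hstep1 : s.card ≤ (s.image f).card * (H + 1) := by
      rw [hsum]
      calc ∑ p ∈ s.image f, (s.filter (fun t => f t = p)).card
          ≤ ∑ _p ∈ s.image f, (H + 1) := Finset.sum_le_sum hfib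
        _ = (s.image f).card * (H + 1) := by rw [Finset.sum_const, smul_eq_mul]
    -- bound the number of (node, claim) pairs
    have hstep2 : (s.image f).card ≤ ∑ n, k n := by
      set T := s.sup id + 1 with hT
      have hdom : ∀ p ∈ s.image f, S T p.1 p.2 ≠ none := by
        intro p hp
        rw [Finset.mem_image] at hp
        obtain ⟨t, ht, hpt⟩ := hp
        have hne : S (t + 1) (node t) (w t) ≠ S t (node t) (w t) := hw t ht
        have hsome : ∃ a, S (t + 1) (node t) (w t) = some a := by
          cases h' : S (t + 1) (node t) (w t) with
          | none =>
              cases h : S t (node t) (w t) with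
              | none => exact absurd (h'.trans h.symm) hne
              | some a =>
                  obtain ⟨a', ha', _⟩ := hmono t (node t) (w t) a h
                  exact absurd (ha'.symm.trans h') (Option.some_ne_none a')
          | some a => exact ⟨a, rfl⟩
        obtain ⟨a, ha⟩ := hsome
        have htT : t + 1 ≤ T := by
          have : t ≤ s.sup id := Finset.le_sup (f := id) ht
          omega
        obtain ⟨a', ha', _⟩ := mono2 _ _ _ _ ha T htT
        rw [← hpt]
        simp [hf, ha']
      have hfibV : ∀ n ∈ (s.image f).image Prod.fst,
          ((s.image f).filter (fun p => Prod.fst p = n)).card ≤ k n := by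
        intro n _
        set G := (s.image f).filter (fun p => Prod.fst p = n) with hG
        have hinj : Set.InjOn Prod.snd (G : Set (V × C)) := by
          intro p hp q hq hpq
          simp only [hG, Finset.coe_filter, Set.mem_setOf_eq] at hp hq
          exact Prod.ext (hp.2.trans hq.2.symm) hpq
        have hcardG : G.card = (G.image Prod.snd).card :=
          (Finset.card_image_of_injOn hinj).symm
        have hsub : ((G.image Prod.snd : Finset C) : Set C) ⊆ {c | S T n c ≠ none} := by
          intro c hc
          simp only [Finset.coe_image, Set.mem_image, Finset.mem_coe] at hc
          obtain ⟨p, hp, hpc⟩ := hc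
          rw [hG, Finset.mem_filter] at hp
          obtain ⟨hp1, hp2⟩ := hp
          have := hdom p hp1
          rw [hp2, hpc] at this
          exact this
        have hle : ((G.image Prod.snd : Finset C) : Set C).ncard ≤
            Set.ncard {c | S T n c ≠ none} :=
          Set.ncard_le_ncard hsub (hbound T n).1
        rw [Set.ncard_coe_finset] at hle
        rw [hcardG]
        exact le_trans hle (hbound T n).2
      have hsum2 : (s.image f).card = ∑ n ∈ (s.image f).image Prod.fst,
          ((s.image f).filter (fun p => Prod.fst p = n)).card :=
        Finset.card_eq_sum_card_fiberwise
          (fun p hp => Finset.mem_image_of_mem Prod.fst hp)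
      calc (s.image f).card
          = ∑ n ∈ (s.image f).image Prod.fst,
            ((s.image f).filter (fun p => Prod.fst p = n)).card := hsum2
        _ ≤ ∑ n ∈ (s.image f).image Prod.fst, k n := Finset.sum_le_sum hfibV
        _ ≤ ∑ n, k n := Finset.sum_le_sum_of_subset (Finset.subset_univ _)
    calc s.card ≤ (s.image f).card * (H + 1) := hstep1
      _ ≤ (∑ n, k n) * (H + 1) := Nat.mul_le_mul_right _ hstep2
      _ = (∑ n, k n) + H * (∑ n, k n) := by ring
  refine ⟨hcount, ?_⟩
  by_contra hne
  push_neg at hne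
  -- the set of triggering times is finite
  set Trig : Set ℕ := {t | S (t + 1) (node t) ≠ S t (node t)} with hTrig
  have hfin : Trig.Finite := by
    by_contra hinf
    have hinf' : Trig.Infinite := hinf
    obtain ⟨F, hFsub, hFcard⟩ :=
      hinf'.exists_subset_card_eq ((∑ n, k n) + H * (∑ n, k n) + 1)
    have := hcount F (fun t ht => hFsub ht)
    omega
  obtain ⟨T, hT⟩ := hfin.bddAbove
  -- after time T, cards strictly decrease
  have hdec : ∀ m, (W (T + 1 + m + 1)).card < (W (T + 1 + m)).card := by
    intro m
    set t := T + 1 + m with ht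
    have htT : t ∉ Trig := by
      intro h
      have := hT h
      omega
    obtain ⟨hmem, hcase⟩ := hW t (Finset.nonempty_iff_ne_empty.mp (hne t))
    rcases hcase with ⟨h1, _⟩ | ⟨_, h2⟩
    · exact absurd h1 htT
    · rw [h2]
      exact Finset.card_erase_lt_of_mem hmem
  have hbd : ∀ m, (W (T + 1 + m)).card + m ≤ (W (T + 1)).card := by
    intro m
    induction m with
    | zero => simp
    | succ m ih =>
        have h1 := hdec m
        have : T + 1 + (m + 1) = T + 1 + m + 1 := by omega
        rw [this]
        omega
  have := hbd ((W (T + 1)).card + 1)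
  omega
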